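/- Let p \ge 5 be a prime. Then the number of pairs (a,b) \in F_p^2 such that the polynomial T^3 + aT + b is separable over F_p and has exactly n roots in F_p equals: (p^2-1)/3 if n = 0; p(p-1)/2 if n = 1; and (p-1)(p-2)/6 if n = 3. -/

import Mathlib

open Polynomial

noncomputable section

/-- The number of pairs `(a,b) ∈ F_p²` such that `T³ + aT + b` is separable and has exactly
`n` roots in `F_p`. -/
def cubicPairCount (p : ℕ) [Fact p.Prime] (n : ℕ) : ℕ :=
  Set.ncard {ab : ZMod p × ZMod p |
    (X ^ 3 + C ab.1 * X + C ab.2 : Polynomial (ZMod p)).Separable ∧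
      Set.ncard {x : ZMod p | x ^ 3 + ab.1 * x + ab.2 = 0} = n}

open Finset


variable {F : Type*} [Field F]

private theorem aux_exists_t (h2 : (2:F) ≠ 0) (h3 : (3:F) ≠ 0) {a b : F} (hD : 4*a^3 + 27*b^2 = 0) :
    ∃ t : F, a = -(3*t^2) ∧ b = 2*t^3 := by
  by_cases haz : a = 0
  · refine ⟨0, by simpa using haz, ?_⟩
    have h27 : (27:F) ≠ 0 := by
      have : (27:F) = 3^3 := by norm_num
      rw [this]; exact pow_ne_zero _ h3
    have hb2 : b^2 = 0 := by
      have : (27:F) * b^2 = 0 := by rw [haz] at hD; linear_combination hD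
      exact (mul_eq_zero.mp this).resolve_left h27
    have : b = 0 := by simpa using pow_eq_zero_iff (n := 2) (by norm_num) |>.mp hb2
    simp [this]
  · exact ⟨-(3*b)/(2*a), by field_simp; linear_combination hD,
      by field_simp; linear_combination b*hD⟩

private theorem aux_sep_iff (h2 : (2:F) ≠ 0) (h3 : (3:F) ≠ 0) (a b : F) :
    (X ^ 3 + C a * X + C b : F[X]).Separable ↔ 4*a^3 + 27*b^2 ≠ 0 := by
  have hder : derivative (X ^ 3 + C a * X + C b : F[X]) = C 3 * X ^ 2 + C a := by
    simp [derivative_X_pow]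
    rw [← C_1, ← C_add]; norm_num
  constructor
  · intro hsep hD
    obtain ⟨t, ha, hb⟩ := aux_exists_t h2 h3 hD
    have hf : (X ^ 3 + C a * X + C b : F[X])
        = (X - C t) * (X - C t) * (X + C (2*t)) := by
      rw [ha, hb]
      simp only [map_mul, map_add, map_pow, map_neg, map_ofNat]
      ring
    have hsf := hsep.squarefree
    rw [hf] at hsf
    exact (Polynomial.not_isUnit_X_sub_C t) (hsf (X - C t) ⟨_, rfl⟩)
  · intro hD
    rw [Polynomial.separable_def, hder]
    refine ⟨C (4*a^3 + 27*b^2)⁻¹ * (C (-(18*a)) * X + C (27*b)),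
      C (4*a^3 + 27*b^2)⁻¹ * (C (6*a) * X ^ 2 + C (-(9*b)) * X + C (4*a^2)), ?_⟩
    have key : (C (-(18*a)) * X + C (27*b)) * (X ^ 3 + C a * X + C b)
      + (C (6*a) * X ^ 2 + C (-(9*b)) * X + C (4*a^2)) * (C 3 * X ^ 2 + C a)
      = C (4*a^3 + 27*b^2) := by
      simp only [map_mul, map_add, map_pow, map_neg, map_ofNat]; ring
    calc C (4*a^3 + 27*b^2)⁻¹ * (C (-(18*a)) * X + C (27*b)) * (X ^ 3 + C a * X + C b) +
        C (4*a^3 + 27*b^2)⁻¹ * (C (6*a) * X ^ 2 + C (-(9*b)) * X + C (4*a^2)) * (C 3 * X ^ 2 + C a)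
        = C (4*a^3 + 27*b^2)⁻¹ * ((C (-(18*a)) * X + C (27*b)) * (X ^ 3 + C a * X + C b)
          + (C (6*a) * X ^ 2 + C (-(9*b)) * X + C (4*a^2)) * (C 3 * X ^ 2 + C a)) := by ring
      _ = 1 := by rw [key, ← map_mul, inv_mul_cancel₀ hD, map_one]



variable {F : Type*} [Field F]

private theorem aux_root_iff (h2 : (2:F) ≠ 0) {a b r : F} (hr : r^3 + a*r + b = 0) (x : F) :
    x^3 + a*x + b = 0 ↔ x = r ∨ (2*x+r)^2 = -(3*r^2+4*a) := by
  have h4 : (4:F) ≠ 0 := by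
    have : (4:F) = 2^2 := by norm_num
    rw [this]; exact pow_ne_zero _ h2
  constructor
  · intro hx
    have hfac : (x - r) * (x^2 + r*x + (a + r^2)) = 0 := by linear_combination hx - hr
    rcases mul_eq_zero.mp hfac with h | h
    · exact Or.inl (sub_eq_zero.mp h)
    · exact Or.inr (by linear_combination 4*h)
  · rintro (rfl | hy)
    · exact hr
    · have : (4:F) * (x^3 + a*x + b) = 0 := by linear_combination (x - r)*hy + 4*hr
      exact (mul_eq_zero.mp this).resolve_left h4
private theorem aux_D_form {a b r : F} (hr : r^3 + a*r + b = 0) :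
    4*a^3 + 27*b^2 = (3*r^2+a)^2 * (3*r^2+4*a) := by
  linear_combination (27*(b - r^3 - a*r)) * hr

private theorem aux_D_facts {a b r : F} (hD : 4*a^3 + 27*b^2 ≠ 0) (hr : r^3 + a*r + b = 0) :
    3*r^2 + a ≠ 0 ∧ 3*r^2 + 4*a ≠ 0 := by
  rw [aux_D_form hr] at hD
  rcases mul_ne_zero_iff.mp hD with ⟨h1, h2⟩
  exact ⟨pow_ne_zero_iff (by norm_num) |>.mp h1, h2⟩

private theorem aux_r_notin (h2 : (2:F) ≠ 0) {a b r : F} (hD : 4*a^3 + 27*b^2 ≠ 0)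
    (hr : r^3 + a*r + b = 0) : ¬ ((2*r+r)^2 = -(3*r^2+4*a)) := by
  intro h
  have h4 : (4:F) ≠ 0 := by
    have : (4:F) = 2^2 := by norm_num
    rw [this]; exact pow_ne_zero _ h2
  have : (4:F) * (3*r^2 + a) = 0 := by linear_combination h
  exact (aux_D_facts hD hr).1 ((mul_eq_zero.mp this).resolve_left h4)

private theorem aux_sqcard (h2 : (2:F) ≠ 0) [Fintype F] [DecidableEq F] (r Δ : F) (hΔ : Δ ≠ 0) :
    (univ.filter fun x : F => (2*x+r)^2 = Δ).card = 0 ∨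
    (univ.filter fun x : F => (2*x+r)^2 = Δ).card = 2 := by
  by_cases he : ∃ x0 : F, (2*x0+r)^2 = Δ
  · right
    obtain ⟨x0, hx0⟩ := he
    have hset : (univ.filter fun x : F => (2*x+r)^2 = Δ) = {x0, -x0-r} := by
      ext x
      simp only [mem_filter, mem_univ, true_and, mem_insert, mem_singleton]
      constructor
      · intro hx
        have hfac : (2*(x - x0)) * (2*(x + x0 + r)) = 0 := by linear_combination hx - hx0
        rcases mul_eq_zero.mp hfac with h | h
        · left
          have := (mul_eq_zero.mp h).resolve_left h2
          linear_combination this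
        · right
          have := (mul_eq_zero.mp h).resolve_left h2
          linear_combination this
      · rintro (rfl | rfl)
        · exact hx0
        · linear_combination hx0
    rw [hset]
    have hne : x0 ≠ -x0 - r := by
      intro h
      apply hΔ
      rw [← hx0]
      have : (2*x0+r) = 0 := by linear_combination h
      rw [this]; ring
    rw [card_insert_of_notMem (by simpa using hne), card_singleton]
  · left
    rw [card_eq_zero, filter_eq_empty_iff]
    push_neg at he
    intro x _
    exact he x

private theorem aux_class (h2 : (2:F) ≠ 0) [Fintype F] [DecidableEq F] {a b : F}
    (hD : 4*a^3 + 27*b^2 ≠ 0) :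
    (univ.filter fun x : F => x^3 + a*x + b = 0).card = 0 ∨
    (univ.filter fun x : F => x^3 + a*x + b = 0).card = 1 ∨
    (univ.filter fun x : F => x^3 + a*x + b = 0).card = 3 := by
  set R := univ.filter fun x : F => x^3 + a*x + b = 0 with hR
  rcases eq_empty_or_nonempty R with h | ⟨r, hrR⟩
  · left; simp [h]
  · have hr : r^3 + a*r + b = 0 := by
      rw [hR] at hrR; exact (mem_filter.mp hrR).2
    right
    have hQdef : R = insert r (univ.filter fun x : F => (2*x+r)^2 = -(3*r^2+4*a)) := by
      ext x
      simp only [hR, mem_filter, mem_univ, true_and, mem_insert]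
      exact aux_root_iff h2 hr x
    have hrnot : r ∉ (univ.filter fun x : F => (2*x+r)^2 = -(3*r^2+4*a)) := by
      simp only [mem_filter, mem_univ, true_and]
      exact aux_r_notin h2 hD hr
    have hΔ : -(3*r^2+4*a) ≠ 0 := neg_ne_zero.mpr (aux_D_facts hD hr).2
    rw [hQdef, card_insert_of_notMem hrnot]
    rcases aux_sqcard h2 r _ hΔ with h | h <;> rw [h] <;> simp

private theorem graph_card {α : Type*} [Fintype α] [DecidableEq α] (f : α → α) :
    (univ.filter fun ra : α × α => ra.2 = f ra.1).card = Fintype.card α := by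
  rw [← card_univ]
  apply card_bij (fun (x : α × α) _ => x.1)
  · intro x hx; exact mem_univ _
  · intro x hx y hy hxy
    simp only [mem_filter] at hx hy
    exact Prod.ext hxy (by rw [hx.2, hy.2, hxy])
  · intro r _
    exact ⟨(r, f r), mem_filter.mpr ⟨mem_univ _, rfl⟩, rfl⟩

section ZModCounts
variable {p : ℕ} [Fact p.Prime]

private theorem two_ne (hp : 5 ≤ p) : (2 : ZMod p) ≠ 0 := by
  intro h
  have : (p : ℕ) ∣ 2 := by
    exact_mod_cast (ZMod.natCast_eq_zero_iff 2 p).mp (by exact_mod_cast h)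
  have := Nat.le_of_dvd (by norm_num) this
  omega

private theorem three_ne (hp : 5 ≤ p) : (3 : ZMod p) ≠ 0 := by
  intro h
  have : (p : ℕ) ∣ 3 := by
    exact_mod_cast (ZMod.natCast_eq_zero_iff 3 p).mp (by exact_mod_cast h)
  have := Nat.le_of_dvd (by norm_num) this
  omega

private theorem four_ne (hp : 5 ≤ p) : (4 : ZMod p) ≠ 0 := by
  have : (4 : ZMod p) = 2^2 := by norm_num
  rw [this]; exact pow_ne_zero _ (two_ne hp)

private theorem card_univ_pair : (univ : Finset (ZMod p × ZMod p)).card = p * p := by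
  rw [card_univ, Fintype.card_prod, ZMod.card]

-- helper: turn a linear-condition filter into a graph filter
private theorem singleton_inter {p : ℕ} [Fact p.Prime] : True := trivial

-- number of (a,b) with 4a³+27b² = 0 is p
private theorem card_D0 (hp : 5 ≤ p) :
    (univ.filter fun ab : ZMod p × ZMod p => 4*ab.1^3 + 27*ab.2^2 = 0).card = p := by
  have h2 := two_ne hp; have h3 := three_ne hp
  have key : (univ.filter fun ab : ZMod p × ZMod p => 4*ab.1^3 + 27*ab.2^2 = 0).card
      = Fintype.card (ZMod p) := by
    rw [← card_univ]
    symm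
    apply card_bij (fun (t : ZMod p) _ => (-(3*t^2), 2*t^3))
    · intro t _
      simp only [mem_filter, mem_univ, true_and]
      ring
    · intro t _ u _ h
      rw [Prod.ext_iff] at h
      obtain ⟨h1, h2'⟩ := h
      simp only at h1 h2'
      have ht2 : t^2 = u^2 := by
        have : (3 : ZMod p) * (t^2 - u^2) = 0 := by linear_combination -h1
        have := (mul_eq_zero.mp this).resolve_left h3
        linear_combination this
      have ht3 : t^3 = u^3 := by
        have : (2 : ZMod p) * (t^3 - u^3) = 0 := by linear_combination h2'
        have := (mul_eq_zero.mp this).resolve_left h2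
        linear_combination this
      by_cases htz : t = 0
      · subst htz
        have : u^2 = 0 := by rw [← ht2]; ring
        have := pow_eq_zero_iff (n := 2) (by norm_num) |>.mp this
        rw [this]
      · have h2z : t^2 ≠ 0 := pow_ne_zero _ htz
        have : t * t^2 = u * t^2 := by
          calc t * t^2 = t^3 := by ring
          _ = u^3 := ht3
          _ = u * u^2 := by ring
          _ = u * t^2 := by rw [ht2]
        exact mul_right_cancel₀ h2z this
    · intro ab hab
      simp only [mem_filter, mem_univ, true_and] at hab
      obtain ⟨t, ha, hb⟩ := aux_exists_t h2 h3 hab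
      exact ⟨t, mem_univ _, by rw [Prod.ext_iff]; exact ⟨ha.symm, hb.symm⟩⟩
  rw [key, ZMod.card]

-- Dom1 count
private theorem card_dom1 (hp : 5 ≤ p) :
    (univ.filter fun ra : ZMod p × ZMod p =>
      3*ra.1^2 + ra.2 ≠ 0 ∧ 3*ra.1^2 + 4*ra.2 ≠ 0).card + 2*p = p*p + 1 := by
  have h3 := three_ne hp; have h4 := four_ne hp
  set P1f := univ.filter (fun ra : ZMod p × ZMod p => 3*ra.1^2 + ra.2 = 0) with hP1f
  set P2f := univ.filter (fun ra : ZMod p × ZMod p => 3*ra.1^2 + 4*ra.2 = 0) with hP2f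
  have hc1 : P1f.card = p := by
    rw [hP1f]
    have he : (univ.filter fun ra : ZMod p × ZMod p => 3*ra.1^2 + ra.2 = 0)
        = univ.filter fun ra : ZMod p × ZMod p => ra.2 = -(3*ra.1^2) := by
      apply filter_congr; intro x _
      constructor <;> intro h <;> linear_combination h
    rw [he]
    exact (graph_card (fun r : ZMod p => -(3*r^2))).trans (ZMod.card p)
  have hc2 : P2f.card = p := by
    rw [hP2f]
    have he : (univ.filter fun ra : ZMod p × ZMod p => 3*ra.1^2 + 4*ra.2 = 0)
        = univ.filter fun ra : ZMod p × ZMod p => ra.2 = -(3*ra.1^2)/4 := by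
      apply filter_congr; intro x _
      constructor
      · intro h
        rw [eq_div_iff h4]
        linear_combination h
      · intro h
        rw [eq_div_iff h4] at h
        linear_combination h
    rw [he]
    exact (graph_card (fun r : ZMod p => -(3*r^2)/4)).trans (ZMod.card p)
  have hc12 : (P1f ∩ P2f).card = 1 := by
    have he : P1f ∩ P2f = {((0 : ZMod p), (0 : ZMod p))} := by
      ext x
      simp only [mem_inter, hP1f, hP2f, mem_filter, mem_univ, true_and, mem_singleton]
      constructor
      · rintro ⟨h1, h2⟩
        have ha : x.2 = 0 := by
          have : (3 : ZMod p) * x.2 = 0 := by linear_combination h2 - h1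
          exact (mul_eq_zero.mp this).resolve_left h3
        have hr : x.1 = 0 := by
          have : (3 : ZMod p) * x.1^2 = 0 := by linear_combination h1 - ha
          have := (mul_eq_zero.mp this).resolve_left h3
          exact pow_eq_zero_iff (n := 2) (by norm_num) |>.mp this
        exact Prod.ext hr ha
      · rintro rfl
        norm_num
    rw [he, card_singleton]
  have hU : (P1f ∪ P2f).card + 1 = p + p := by
    have := card_union_add_card_inter P1f P2f
    rw [hc1, hc2, hc12] at this
    exact this
  have hDom : (univ.filter fun ra : ZMod p × ZMod p =>
      3*ra.1^2 + ra.2 ≠ 0 ∧ 3*ra.1^2 + 4*ra.2 ≠ 0) = univ \ (P1f ∪ P2f) := by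
    ext x
    simp only [mem_filter, mem_univ, true_and, mem_sdiff, mem_union, hP1f, hP2f]
    tauto
  have hsd := card_sdiff_add_card_eq_card (subset_univ (P1f ∪ P2f))
  rw [card_univ_pair] at hsd
  rw [hDom]
  omega

-- Dom2 count
private theorem card_dom2 (hp : 5 ≤ p) :
    (univ.filter fun rs : ZMod p × ZMod p =>
      rs.1 ≠ rs.2 ∧ rs.1 + 2*rs.2 ≠ 0 ∧ 2*rs.1 + rs.2 ≠ 0).card + 3*p = p*p + 2 := by
  have h2 := two_ne hp; have h3 := three_ne hp
  set Q1 := univ.filter (fun rs : ZMod p × ZMod p => rs.1 = rs.2) with hQ1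
  set Q2 := univ.filter (fun rs : ZMod p × ZMod p => rs.1 + 2*rs.2 = 0) with hQ2
  set Q3 := univ.filter (fun rs : ZMod p × ZMod p => 2*rs.1 + rs.2 = 0) with hQ3
  have hc1 : Q1.card = p := by
    rw [hQ1]
    have he : (univ.filter fun rs : ZMod p × ZMod p => rs.1 = rs.2)
        = univ.filter fun rs : ZMod p × ZMod p => rs.2 = rs.1 := by
      apply filter_congr; intro x _; constructor <;> intro h <;> exact h.symm
    rw [he]
    exact (graph_card (fun r : ZMod p => r)).trans (ZMod.card p)
  have hc2 : Q2.card = p := by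
    rw [hQ2]
    have he : (univ.filter fun rs : ZMod p × ZMod p => rs.1 + 2*rs.2 = 0)
        = univ.filter fun rs : ZMod p × ZMod p => rs.2 = -rs.1/2 := by
      apply filter_congr; intro x _
      constructor
      · intro h; rw [eq_div_iff h2]; linear_combination h
      · intro h; rw [eq_div_iff h2] at h; linear_combination h
    rw [he]
    exact (graph_card (fun r : ZMod p => -r/2)).trans (ZMod.card p)
  have hc3 : Q3.card = p := by
    rw [hQ3]
    have he : (univ.filter fun rs : ZMod p × ZMod p => 2*rs.1 + rs.2 = 0)
        = univ.filter fun rs : ZMod p × ZMod p => rs.2 = -(2*rs.1) := by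
      apply filter_congr; intro x _
      constructor <;> intro h <;> linear_combination h
    rw [he]
    exact (graph_card (fun r : ZMod p => -(2*r))).trans (ZMod.card p)
  have pair_eq : ∀ x : ZMod p × ZMod p, x.2 = 0 → x.1 = 0 → x = ((0 : ZMod p), (0 : ZMod p)) := by
    intro x h1 h2; exact Prod.ext h2 h1
  have e12 : Q1 ∩ Q2 = {((0 : ZMod p), (0 : ZMod p))} := by
    ext x
    simp only [mem_inter, hQ1, hQ2, mem_filter, mem_univ, true_and, mem_singleton]
    constructor
    · rintro ⟨h1, h2⟩
      have hs : x.2 = 0 := by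
        have : (3 : ZMod p) * x.2 = 0 := by linear_combination h2 - h1
        exact (mul_eq_zero.mp this).resolve_left h3
      exact pair_eq x hs (by rw [h1, hs])
    · rintro rfl; norm_num
  have e13 : Q1 ∩ Q3 = {((0 : ZMod p), (0 : ZMod p))} := by
    ext x
    simp only [mem_inter, hQ1, hQ3, mem_filter, mem_univ, true_and, mem_singleton]
    constructor
    · rintro ⟨h1, h2⟩
      have hs : x.2 = 0 := by
        have : (3 : ZMod p) * x.2 = 0 := by linear_combination h2 - 2*h1
        exact (mul_eq_zero.mp this).resolve_left h3
      exact pair_eq x hs (by rw [h1, hs])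
    · rintro rfl; norm_num
  have e23 : Q2 ∩ Q3 = {((0 : ZMod p), (0 : ZMod p))} := by
    ext x
    simp only [mem_inter, hQ2, hQ3, mem_filter, mem_univ, true_and, mem_singleton]
    constructor
    · rintro ⟨h1, h2⟩
      have hs : x.2 = 0 := by
        have : (3 : ZMod p) * x.2 = 0 := by linear_combination 2*h1 - h2
        exact (mul_eq_zero.mp this).resolve_left h3
      have hr : x.1 = 0 := by linear_combination h1 - 2*hs
      exact pair_eq x hs hr
    · rintro rfl; norm_num
  have hU2 : (Q1 ∪ Q2).card + 1 = p + p := by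
    have := card_union_add_card_inter Q1 Q2
    rw [hc1, hc2, e12, card_singleton] at this
    exact this
  have hmix : ((Q1 ∪ Q2) ∩ Q3).card = 1 := by
    rw [union_inter_distrib_right, e13, e23, union_self, card_singleton]
  have hU3 : (Q1 ∪ Q2 ∪ Q3).card + 1 = (Q1 ∪ Q2).card + p := by
    have := card_union_add_card_inter (Q1 ∪ Q2) Q3
    rw [hmix, hc3] at this
    exact this
  have hDom : (univ.filter fun rs : ZMod p × ZMod p =>
      rs.1 ≠ rs.2 ∧ rs.1 + 2*rs.2 ≠ 0 ∧ 2*rs.1 + rs.2 ≠ 0) = univ \ (Q1 ∪ Q2 ∪ Q3) := by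
    ext x
    simp only [mem_filter, mem_univ, true_and, mem_sdiff, mem_union, hQ1, hQ2, hQ3]
    tauto
  have hsd := card_sdiff_add_card_eq_card (subset_univ (Q1 ∪ Q2 ∪ Q3))
  rw [card_univ_pair] at hsd
  rw [hDom]
  omega

end ZModCounts

section Part5
variable {p : ℕ} [Fact p.Prime]

private def nRootsF (p : ℕ) [Fact p.Prime] (ab : ZMod p × ZMod p) : ℕ :=
  (univ.filter fun x : ZMod p => x^3 + ab.1*x + ab.2 = 0).card

private def AsepF (p : ℕ) [Fact p.Prime] : Finset (ZMod p × ZMod p) :=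
  univ.filter fun ab => 4*ab.1^3 + 27*ab.2^2 ≠ 0

private def NnF (p : ℕ) [Fact p.Prime] (n : ℕ) : ℕ :=
  ((AsepF p).filter fun ab => nRootsF p ab = n).card

private theorem ncard_eq_filter_card {α : Type*} [Fintype α] [DecidableEq α] (P : α → Prop)
    [DecidablePred P] : Set.ncard {x | P x} = (univ.filter P).card := by
  rw [← Set.ncard_coe_finset]
  congr 1
  ext x
  simp

private theorem L_A (hp : 5 ≤ p) : (AsepF p).card + p = p * p := by
  have := Finset.card_filter_add_card_filter_not
    (s := (univ : Finset (ZMod p × ZMod p)))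
    (p := fun ab => 4*ab.1^3 + 27*ab.2^2 = 0)
  rw [card_D0 hp, card_univ_pair] at this
  have heq : (AsepF p) = univ.filter (fun ab : ZMod p × ZMod p => ¬ (4*ab.1^3 + 27*ab.2^2 = 0)) := by
    apply filter_congr
    intro x _
    rfl
  rw [heq]
  omega

-- T1 counting
private theorem L_T1 (hp : 5 ≤ p) : NnF p 1 + 3 * NnF p 3 + 2*p = p*p + 1 := by
  have h2 := two_ne hp
  set T1 := (univ : Finset ((ZMod p × ZMod p) × ZMod p)).filter
    (fun x => 4*x.1.1^3 + 27*x.1.2^2 ≠ 0 ∧ x.2^3 + x.1.1*x.2 + x.1.2 = 0) with hT1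
  -- T1.card = ∑ over Asep of nRoots
  have hfib : T1.card = ∑ ab ∈ AsepF p, nRootsF p ab := by
    rw [card_eq_sum_card_fiberwise (f := Prod.fst) (t := AsepF p)
      (fun x hx => by
        simp only [hT1, mem_coe, mem_filter, mem_univ, true_and] at hx
        exact mem_filter.mpr ⟨mem_univ _, hx.1⟩)]
    apply sum_congr rfl
    intro ab hab
    have habD : 4*ab.1^3 + 27*ab.2^2 ≠ 0 := (mem_filter.mp hab).2
    apply card_bij (fun (x : (ZMod p × ZMod p) × ZMod p) _ => x.2)
    · intro x hx
      simp only [hT1, mem_coe, mem_filter, mem_univ, true_and] at hx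
      obtain ⟨⟨hD, hroot⟩, hfst⟩ := hx
      subst hfst
      exact mem_filter.mpr ⟨mem_univ _, hroot⟩
    · intro x hx y hy hxy
      simp only [hT1, mem_filter, mem_univ, true_and] at hx hy
      exact Prod.ext (hx.2.trans hy.2.symm) hxy
    · intro r hr
      exact ⟨(ab, r), mem_filter.mpr ⟨mem_filter.mpr ⟨mem_univ _, habD,
        (mem_filter.mp hr).2⟩, rfl⟩, rfl⟩
  -- T1.card = Dom1.card
  have hbij : T1.card = (univ.filter fun ra : ZMod p × ZMod p =>
      3*ra.1^2 + ra.2 ≠ 0 ∧ 3*ra.1^2 + 4*ra.2 ≠ 0).card := by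
    apply card_nbij' (fun (x : (ZMod p × ZMod p) × ZMod p) => (x.2, x.1.1))
      (fun (ra : ZMod p × ZMod p) => ((ra.2, -(ra.1^3) - ra.2*ra.1), ra.1))
    · intro x hx
      simp only [hT1, mem_coe, mem_filter, mem_univ, true_and] at hx
      obtain ⟨hD, hroot⟩ := hx
      simp only [mem_coe, mem_filter, mem_univ, true_and]
      exact aux_D_facts hD hroot
    · intro ra hra
      simp only [mem_coe, mem_filter, mem_univ, true_and] at hra
      simp only [hT1, mem_coe, mem_filter, mem_univ, true_and]
      constructor
      · have hr' : ra.1^3 + ra.2*ra.1 + (-(ra.1^3) - ra.2*ra.1) = 0 := by ring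
        rw [aux_D_form hr']
        exact mul_ne_zero (pow_ne_zero _ hra.1) hra.2
      · ring
    · intro x hx
      simp only [hT1, mem_coe, mem_filter, mem_univ, true_and] at hx
      obtain ⟨hD, hroot⟩ := hx
      have hb : -(x.2^3) - x.1.1*x.2 = x.1.2 := by linear_combination -hroot
      exact Prod.ext (Prod.ext rfl hb) rfl
    · intro ra hra
      rfl
  -- sum = N1 + 3 N3
  have hsum : ∑ ab ∈ AsepF p, nRootsF p ab = NnF p 1 + 3 * NnF p 3 := by
    have hcong : ∀ ab ∈ AsepF p, nRootsF p ab
        = (if nRootsF p ab = 1 then 1 else 0) + (if nRootsF p ab = 3 then 3 else 0) := by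
      intro ab hab
      have habD : 4*ab.1^3 + 27*ab.2^2 ≠ 0 := (mem_filter.mp hab).2
      rcases aux_class h2 habD with h | h | h <;>
        · unfold nRootsF
          rw [h]
          norm_num
    rw [sum_congr rfl hcong, sum_add_distrib, ← sum_filter, ← sum_filter,
      sum_const, sum_const, smul_eq_mul, smul_eq_mul, mul_one]
    unfold NnF
    ring
  have hdom := card_dom1 hp
  rw [hfib, hsum] at hbij
  omega

end Part5

section Part6
variable {p : ℕ} [Fact p.Prime]

private theorem L_T2 (hp : 5 ≤ p) : 6 * NnF p 3 + 3*p = p*p + 2 := by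
  have h2 := two_ne hp
  set T2 := (univ : Finset ((ZMod p × ZMod p) × (ZMod p × ZMod p))).filter
    (fun x => 4*x.1.1^3 + 27*x.1.2^2 ≠ 0 ∧ x.2.1^3 + x.1.1*x.2.1 + x.1.2 = 0 ∧
      x.2.2^3 + x.1.1*x.2.2 + x.1.2 = 0 ∧ x.2.1 ≠ x.2.2) with hT2
  have hfib : T2.card = ∑ ab ∈ AsepF p, (nRootsF p ab * nRootsF p ab - nRootsF p ab) := by
    rw [card_eq_sum_card_fiberwise (f := Prod.fst) (t := AsepF p)
      (fun x hx => by
        simp only [hT2, mem_coe, mem_filter, mem_univ, true_and] at hx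
        exact mem_filter.mpr ⟨mem_univ _, hx.1⟩)]
    apply sum_congr rfl
    intro ab hab
    have habD : 4*ab.1^3 + 27*ab.2^2 ≠ 0 := (mem_filter.mp hab).2
    have : (T2.filter fun x => x.1 = ab).card
        = ((univ.filter fun x : ZMod p => x^3 + ab.1*x + ab.2 = 0).offDiag).card := by
      apply card_nbij (fun x => x.2)
      · intro x hx
        simp only [hT2, mem_coe, mem_filter, mem_univ, true_and] at hx
        obtain ⟨⟨hD, hr, hs, hne⟩, hfst⟩ := hx
        subst hfst
        exact mem_offDiag.mpr ⟨mem_filter.mpr ⟨mem_univ _, hr⟩,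
          mem_filter.mpr ⟨mem_univ _, hs⟩, hne⟩
      · intro x hx y hy hxy
        simp only [coe_filter, Set.mem_setOf_eq] at hx hy
        exact Prod.ext (hx.2.trans hy.2.symm) hxy
      · intro rs hrs
        simp only [coe_offDiag, Set.mem_offDiag, mem_coe, mem_filter, mem_univ, true_and] at hrs
        have hmem : (ab, rs) ∈ T2.filter (fun x => x.1 = ab) :=
          mem_filter.mpr ⟨mem_filter.mpr ⟨mem_univ _, habD, hrs.1, hrs.2.1, hrs.2.2⟩, rfl⟩
        exact ⟨(ab, rs), hmem, rfl⟩
    rw [this, offDiag_card]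
    rfl
  have hbij : T2.card = (univ.filter fun rs : ZMod p × ZMod p =>
      rs.1 ≠ rs.2 ∧ rs.1 + 2*rs.2 ≠ 0 ∧ 2*rs.1 + rs.2 ≠ 0).card := by
    apply card_nbij' (fun (x : (ZMod p × ZMod p) × (ZMod p × ZMod p)) => x.2)
      (fun (rs : ZMod p × ZMod p) =>
        ((-(rs.1^2 + rs.1*rs.2 + rs.2^2), rs.1^2*rs.2 + rs.1*rs.2^2), rs))
    · intro x hx
      simp only [hT2, mem_coe, mem_filter, mem_univ, true_and] at hx
      obtain ⟨hD, hr, hs, hne⟩ := hx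
      have haeq : x.2.1^2 + x.2.1*x.2.2 + x.2.2^2 + x.1.1 = 0 := by
        have hfac : (x.2.1 - x.2.2) * (x.2.1^2 + x.2.1*x.2.2 + x.2.2^2 + x.1.1) = 0 := by
          linear_combination hr - hs
        exact (mul_eq_zero.mp hfac).resolve_left (sub_ne_zero.mpr hne)
      have ha : x.1.1 = -(x.2.1^2 + x.2.1*x.2.2 + x.2.2^2) := by linear_combination haeq
      have hb : x.1.2 = x.2.1^2*x.2.2 + x.2.1*x.2.2^2 := by
        linear_combination hr - x.2.1*haeq
      have hDform : 4*x.1.1^3 + 27*x.1.2^2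
          = -((x.2.1 - x.2.2)*(x.2.1 + 2*x.2.2)*(2*x.2.1 + x.2.2))^2 := by
        rw [ha, hb]; ring
      refine mem_filter.mpr ⟨mem_univ _, hne, ?_, ?_⟩
      · intro h; exact hD (by rw [hDform, h]; ring)
      · intro h; exact hD (by rw [hDform, h]; ring)
    · intro rs hrs
      simp only [mem_coe, mem_filter, mem_univ, true_and] at hrs
      obtain ⟨hne, h1, h2'⟩ := hrs
      refine mem_filter.mpr ⟨mem_univ _, ?_, by ring, by ring, hne⟩
      have : 4*(-(rs.1^2 + rs.1*rs.2 + rs.2^2))^3 + 27*(rs.1^2*rs.2 + rs.1*rs.2^2)^2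
          = -((rs.1 - rs.2)*(rs.1 + 2*rs.2)*(2*rs.1 + rs.2))^2 := by ring
      rw [this]
      exact neg_ne_zero.mpr (pow_ne_zero _
        (mul_ne_zero (mul_ne_zero (sub_ne_zero.mpr hne) h1) h2'))
    · intro x hx
      simp only [hT2, mem_coe, mem_filter, mem_univ, true_and] at hx
      obtain ⟨hD, hr, hs, hne⟩ := hx
      have haeq : x.2.1^2 + x.2.1*x.2.2 + x.2.2^2 + x.1.1 = 0 := by
        have hfac : (x.2.1 - x.2.2) * (x.2.1^2 + x.2.1*x.2.2 + x.2.2^2 + x.1.1) = 0 := by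
          linear_combination hr - hs
        exact (mul_eq_zero.mp hfac).resolve_left (sub_ne_zero.mpr hne)
      have ha : -(x.2.1^2 + x.2.1*x.2.2 + x.2.2^2) = x.1.1 := by linear_combination -haeq
      have hb : x.2.1^2*x.2.2 + x.2.1*x.2.2^2 = x.1.2 := by
        linear_combination x.2.1*haeq - hr
      exact Prod.ext (Prod.ext ha hb) rfl
    · intro rs hrs
      rfl
  have hsum : ∑ ab ∈ AsepF p, (nRootsF p ab * nRootsF p ab - nRootsF p ab) = 6 * NnF p 3 := by
    have hcong : ∀ ab ∈ AsepF p, nRootsF p ab * nRootsF p ab - nRootsF p ab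
        = (if nRootsF p ab = 3 then 6 else 0) := by
      intro ab hab
      have habD : 4*ab.1^3 + 27*ab.2^2 ≠ 0 := (mem_filter.mp hab).2
      rcases aux_class h2 habD with h | h | h <;>
        · unfold nRootsF
          rw [h]
          norm_num
    rw [sum_congr rfl hcong, ← sum_filter, sum_const, smul_eq_mul]
    unfold NnF
    ring
  have hdom := card_dom2 hp
  rw [hfib, hsum] at hbij
  omega

private theorem L_part (hp : 5 ≤ p) :
    NnF p 0 + NnF p 1 + NnF p 3 = (AsepF p).card := by
  have h2 := two_ne hp
  have hcard : (AsepF p).card = ∑ _ab ∈ AsepF p, 1 := by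
    rw [sum_const, smul_eq_mul, mul_one]
  have hcong : ∀ ab ∈ AsepF p, (1 : ℕ) = (if nRootsF p ab = 0 then 1 else 0)
      + (if nRootsF p ab = 1 then 1 else 0) + (if nRootsF p ab = 3 then 1 else 0) := by
    intro ab hab
    have habD : 4*ab.1^3 + 27*ab.2^2 ≠ 0 := (mem_filter.mp hab).2
    rcases aux_class h2 habD with h | h | h <;>
      · unfold nRootsF
        rw [h]
        norm_num
  rw [hcard, sum_congr rfl hcong, sum_add_distrib, sum_add_distrib,
    ← sum_filter, ← sum_filter, ← sum_filter, sum_const, sum_const, sum_const,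
    smul_eq_mul, smul_eq_mul, smul_eq_mul, mul_one, mul_one, mul_one]
  rfl

end Part6

section Part7
variable {p : ℕ} [Fact p.Prime]

private theorem L_count (hp : 5 ≤ p) (n : ℕ) : cubicPairCount p n = NnF p n := by
  unfold cubicPairCount
  have hset : {ab : ZMod p × ZMod p |
      (X ^ 3 + C ab.1 * X + C ab.2 : Polynomial (ZMod p)).Separable ∧
        Set.ncard {x : ZMod p | x ^ 3 + ab.1 * x + ab.2 = 0} = n}
      = ↑((AsepF p).filter fun ab => nRootsF p ab = n) := by
    ext ab
    simp only [Set.mem_setOf_eq, mem_coe, mem_filter, AsepF, mem_univ, true_and]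
    rw [aux_sep_iff (two_ne hp) (three_ne hp),
      ncard_eq_filter_card (fun x : ZMod p => x ^ 3 + ab.1 * x + ab.2 = 0)]
    rfl
  rw [hset, Set.ncard_coe_finset]
  rfl

end Part7

/-- For a prime `p ≥ 5`, the number of pairs `(a,b) ∈ F_p²` with `T³ + aT + b` separable having
exactly `n` roots in `F_p` is `(p²-1)/3` for `n = 0`, `p(p-1)/2` for `n = 1`, and
`(p-1)(p-2)/6` for `n = 3`. -/
theorem cubicPairCount_eq (p : ℕ) [Fact p.Prime] (hp : 5 ≤ p) :
    (cubicPairCount p 0 : ℚ) = ((p : ℚ) ^ 2 - 1) / 3 ∧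
    (cubicPairCount p 1 : ℚ) = (p : ℚ) * ((p : ℚ) - 1) / 2 ∧
    (cubicPairCount p 3 : ℚ) = ((p : ℚ) - 1) * ((p : ℚ) - 2) / 6 := by
  have e1 : NnF p 0 + NnF p 1 + NnF p 3 + p = p * p := by
    rw [L_part hp]; exact L_A hp
  have e2 : NnF p 1 + 3 * NnF p 3 + 2*p = p*p + 1 := L_T1 hp
  have e3 : 6 * NnF p 3 + 3*p = p*p + 2 := L_T2 hp
  have q1 : (NnF p 0 : ℚ) + NnF p 1 + NnF p 3 + p = p * p := by exact_mod_cast congrArg (Nat.cast : ℕ → ℚ) e1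
  have q2 : (NnF p 1 : ℚ) + 3 * NnF p 3 + 2*p = p*p + 1 := by exact_mod_cast congrArg (Nat.cast : ℕ → ℚ) e2
  have q3 : 6 * (NnF p 3 : ℚ) + 3*p = p*p + 2 := by exact_mod_cast congrArg (Nat.cast : ℕ → ℚ) e3
  have hsq : ((p : ℚ))^2 = (p : ℚ) * p := pow_two (p : ℚ)
  refine ⟨?_, ?_, ?_⟩ <;> rw [L_count hp] <;> field_simp <;> linarith [hsq, q1, q2, q3]

end
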